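/- Let L = −a^{xx}(x)∂_x² − 2a^{xy}(x)∂_x∂_y − a^{yy}(x)∂_y² be uniformly elliptic on the sector S = {θ₀ < θ < θ₁, 0 < r < R} in polar coordinates, with θ₁ − θ₀ > π (and ≤ 2π), and suppose |a^{xx}|, |a^{xy}| ≤ C a^{yy} with ellipticity constants uniform on S. Then there exist ε ∈ (0,1) and θ₊ ∈ (θ₀, θ₁) such that the function s(r, θ) = r^{1−ε}(1 + a cos(θ − θ₊)), for appropriate a ≥ 1, satisfies L s ≤ 0 in S, s ≤ 0 on the two boundary radii θ = θ₀ and θ = θ₁, and s(r, θ₊) ≥ r^{1−ε} for 0 ≤ r ≤ R. -/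

import Mathlib

open Real Set


noncomputable def sfun (m b a c d : ℝ) (p : ℝ × ℝ) : ℝ :=
  (p.1 ^ 2 + p.2 ^ 2) ^ m + a * ((c * p.1 + d * p.2) * (p.1 ^ 2 + p.2 ^ 2) ^ b)

noncomputable def SX (m b a c d x y : ℝ) : ℝ :=
  2 * x * m * (x ^ 2 + y ^ 2) ^ (m - 1)
    + a * (c * (x ^ 2 + y ^ 2) ^ b + (c * x + d * y) * (2 * x * b * (x ^ 2 + y ^ 2) ^ (b - 1)))

noncomputable def SY (m b a c d x y : ℝ) : ℝ :=
  2 * y * m * (x ^ 2 + y ^ 2) ^ (m - 1)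
    + a * (d * (x ^ 2 + y ^ 2) ^ b + (c * x + d * y) * (2 * y * b * (x ^ 2 + y ^ 2) ^ (b - 1)))

noncomputable def SXX (m b a c d x y : ℝ) : ℝ :=
  (2 * m * (x ^ 2 + y ^ 2) + 4 * m * (m - 1) * x ^ 2) * (x ^ 2 + y ^ 2) ^ (m - 2)
    + a * ((4 * b * c * x * (x ^ 2 + y ^ 2) + 2 * b * (c * x + d * y) * (x ^ 2 + y ^ 2)
        + 4 * b * (b - 1) * x ^ 2 * (c * x + d * y)) * (x ^ 2 + y ^ 2) ^ (b - 2))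

noncomputable def SYY (m b a c d x y : ℝ) : ℝ :=
  (2 * m * (x ^ 2 + y ^ 2) + 4 * m * (m - 1) * y ^ 2) * (x ^ 2 + y ^ 2) ^ (m - 2)
    + a * ((4 * b * d * y * (x ^ 2 + y ^ 2) + 2 * b * (c * x + d * y) * (x ^ 2 + y ^ 2)
        + 4 * b * (b - 1) * y ^ 2 * (c * x + d * y)) * (x ^ 2 + y ^ 2) ^ (b - 2))

noncomputable def SXY (m b a c d x y : ℝ) : ℝ :=
  (4 * m * (m - 1) * x * y) * (x ^ 2 + y ^ 2) ^ (m - 2)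
    + a * ((2 * b * (d * x + c * y) * (x ^ 2 + y ^ 2)
        + 4 * b * (b - 1) * x * y * (c * x + d * y)) * (x ^ 2 + y ^ 2) ^ (b - 2))

lemma hq_deriv (y x : ℝ) : HasDerivAt (fun t : ℝ => t ^ 2 + y ^ 2) (2 * x) x := by
  simpa using (hasDerivAt_pow 2 x).add_const (y ^ 2)

lemma rpow_shift (q e : ℝ) (hq : q ≠ 0) : q ^ (e - 1) = q ^ (e - 2) * q := by
  rw [show e - 1 = (e - 2) + 1 by ring, Real.rpow_add_one hq]

lemma hasDerivAt_SX (m b a c d y x : ℝ) (hq : x ^ 2 + y ^ 2 ≠ 0) :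
    HasDerivAt (fun t => sfun m b a c d (t, y)) (SX m b a c d x y) x := by
  have h1 := hq_deriv y x
  have h2 := h1.rpow_const (p := m) (Or.inl hq)
  have h3 := h1.rpow_const (p := b) (Or.inl hq)
  have h4 : HasDerivAt (fun t : ℝ => c * t + d * y) c x := by
    simpa using ((hasDerivAt_id x).const_mul c).add_const (d * y)
  have h5 := (h4.mul h3).const_mul a
  have := h2.add h5
  refine this.congr_deriv ?_
  all_goals unfold SX; ring

lemma hasDerivAt_SY (m b a c d x y : ℝ) (hq : x ^ 2 + y ^ 2 ≠ 0) :
    HasDerivAt (fun t => sfun m b a c d (x, t)) (SY m b a c d x y) y := by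
  have h1 : HasDerivAt (fun t : ℝ => x ^ 2 + t ^ 2) (2 * y) y := by
    simpa using (hasDerivAt_pow 2 y).const_add (x ^ 2)
  have h2 := h1.rpow_const (p := m) (Or.inl hq)
  have h3 := h1.rpow_const (p := b) (Or.inl hq)
  have h4 : HasDerivAt (fun t : ℝ => c * x + d * t) d y := by
    simpa using ((hasDerivAt_id y).const_mul d).const_add (c * x)
  have h5 := (h4.mul h3).const_mul a
  have := h2.add h5
  refine this.congr_deriv ?_
  all_goals unfold SY; ring

lemma hasDerivAt_SXX (m b a c d y x : ℝ) (hq : x ^ 2 + y ^ 2 ≠ 0) :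
    HasDerivAt (fun t => SX m b a c d t y) (SXX m b a c d x y) x := by
  have h1 := hq_deriv y x
  have h2 := h1.rpow_const (p := m - 1) (Or.inl hq)
  have h3 := h1.rpow_const (p := b) (Or.inl hq)
  have h4 := h1.rpow_const (p := b - 1) (Or.inl hq)
  have hlin : HasDerivAt (fun t : ℝ => 2 * t * m) (2 * m) x := by
    simpa [mul_comm, mul_assoc] using ((hasDerivAt_id x).const_mul 2).mul_const m
  have hw : HasDerivAt (fun t : ℝ => c * t + d * y) c x := by
    simpa using ((hasDerivAt_id x).const_mul c).add_const (d * y)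
  have hxb : HasDerivAt (fun t : ℝ => 2 * t * b) (2 * b) x := by
    simpa [mul_comm, mul_assoc] using ((hasDerivAt_id x).const_mul 2).mul_const b
  have hT1 := hlin.mul h2
  have hT2 := h3.const_mul c
  have hT3 := hw.mul (hxb.mul h4)
  have := hT1.add ((hT2.add hT3).const_mul a)
  refine this.congr_deriv ?_
  all_goals unfold SXX; simp only [Pi.mul_apply]; rw [show m - 1 - 1 = m - 2 by ring, show b - 1 - 1 = b - 2 by ring,
    rpow_shift _ m hq, rpow_shift _ b hq]; ring

lemma hasDerivAt_SXY (m b a c d x y : ℝ) (hq : x ^ 2 + y ^ 2 ≠ 0) :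
    HasDerivAt (fun t => SY m b a c d t y) (SXY m b a c d x y) x := by
  have h1 := hq_deriv y x
  have h2 := h1.rpow_const (p := m - 1) (Or.inl hq)
  have h3 := h1.rpow_const (p := b) (Or.inl hq)
  have h4 := h1.rpow_const (p := b - 1) (Or.inl hq)
  have hw : HasDerivAt (fun t : ℝ => c * t + d * y) c x := by
    simpa using ((hasDerivAt_id x).const_mul c).add_const (d * y)
  have hT1 := h2.const_mul (2 * y * m)
  have hT2 := h3.const_mul d
  have hT3 := hw.mul (h4.const_mul (2 * y * b))
  have := hT1.add ((hT2.add hT3).const_mul a)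
  refine this.congr_deriv ?_
  all_goals unfold SXY; rw [show m - 1 - 1 = m - 2 by ring, show b - 1 - 1 = b - 2 by ring,
    rpow_shift _ b hq]; ring

lemma hasDerivAt_SYY (m b a c d x y : ℝ) (hq : x ^ 2 + y ^ 2 ≠ 0) :
    HasDerivAt (fun t => SY m b a c d x t) (SYY m b a c d x y) y := by
  have h1 : HasDerivAt (fun t : ℝ => x ^ 2 + t ^ 2) (2 * y) y := by
    simpa using (hasDerivAt_pow 2 y).const_add (x ^ 2)
  have h2 := h1.rpow_const (p := m - 1) (Or.inl hq)
  have h3 := h1.rpow_const (p := b) (Or.inl hq)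
  have h4 := h1.rpow_const (p := b - 1) (Or.inl hq)
  have hlin : HasDerivAt (fun t : ℝ => 2 * t * m) (2 * m) y := by
    simpa [mul_comm, mul_assoc] using ((hasDerivAt_id y).const_mul 2).mul_const m
  have hw : HasDerivAt (fun t : ℝ => c * x + d * t) d y := by
    simpa using ((hasDerivAt_id y).const_mul d).const_add (c * x)
  have hyb : HasDerivAt (fun t : ℝ => 2 * t * b) (2 * b) y := by
    simpa [mul_comm, mul_assoc] using ((hasDerivAt_id y).const_mul 2).mul_const b
  have hT1 := hlin.mul h2
  have hT2 := h3.const_mul d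
  have hT3 := hw.mul (hyb.mul h4)
  have := hT1.add ((hT2.add hT3).const_mul a)
  refine this.congr_deriv ?_
  all_goals unfold SYY; simp only [Pi.mul_apply]; rw [show m - 1 - 1 = m - 2 by ring, show b - 1 - 1 = b - 2 by ring,
    rpow_shift _ m hq, rpow_shift _ b hq]; ring

lemma ev_ne_x (x y : ℝ) (hq : x ^ 2 + y ^ 2 ≠ 0) :
    ∀ᶠ t in nhds x, t ^ 2 + y ^ 2 ≠ 0 := by
  have hc : ContinuousAt (fun t : ℝ => t ^ 2 + y ^ 2) x := by fun_prop
  exact hc.eventually_ne hq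

lemma ev_ne_y (x y : ℝ) (hq : x ^ 2 + y ^ 2 ≠ 0) :
    ∀ᶠ t in nhds y, x ^ 2 + t ^ 2 ≠ 0 := by
  have hc : ContinuousAt (fun t : ℝ => x ^ 2 + t ^ 2) y := by fun_prop
  exact hc.eventually_ne hq

lemma deriv_xx (m b a c d x y : ℝ) (hq : x ^ 2 + y ^ 2 ≠ 0) :
    deriv (fun t => deriv (fun t' => sfun m b a c d (t', y)) t) x = SXX m b a c d x y := by
  have hev : (fun t => deriv (fun t' => sfun m b a c d (t', y)) t)
      =ᶠ[nhds x] fun t => SX m b a c d t y :=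
    (ev_ne_x x y hq).mono fun t ht => (hasDerivAt_SX m b a c d y t ht).deriv
  rw [hev.deriv_eq]
  exact (hasDerivAt_SXX m b a c d y x hq).deriv

lemma deriv_xy (m b a c d x y : ℝ) (hq : x ^ 2 + y ^ 2 ≠ 0) :
    deriv (fun t => deriv (fun u => sfun m b a c d (t, u)) y) x = SXY m b a c d x y := by
  have hev : (fun t => deriv (fun u => sfun m b a c d (t, u)) y)
      =ᶠ[nhds x] fun t => SY m b a c d t y :=
    (ev_ne_x x y hq).mono fun t ht => (hasDerivAt_SY m b a c d t y ht).deriv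
  rw [hev.deriv_eq]
  exact (hasDerivAt_SXY m b a c d x y hq).deriv

lemma deriv_yy (m b a c d x y : ℝ) (hq : x ^ 2 + y ^ 2 ≠ 0) :
    deriv (fun u => deriv (fun u' => sfun m b a c d (x, u')) u) y = SYY m b a c d x y := by
  have hev : (fun u => deriv (fun u' => sfun m b a c d (x, u')) u)
      =ᶠ[nhds y] fun u => SY m b a c d x u :=
    (ev_ne_y x y hq).mono fun u hu => (hasDerivAt_SY m b a c d x u hu).deriv
  rw [hev.deriv_eq]
  exact (hasDerivAt_SYY m b a c d x y hq).deriv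

lemma alg_id (ε a c d axx axy ayy x y PP TT m b q : ℝ)
    (hm : m = (1 - ε) / 2) (hb : b = -ε / 2) (hq : q = x ^ 2 + y ^ 2) :
    axx * ((2 * m * q + 4 * m * (m - 1) * x ^ 2) * PP
        + a * ((4 * b * c * x * q + 2 * b * (c * x + d * y) * q
            + 4 * b * (b - 1) * x ^ 2 * (c * x + d * y)) * TT))
      + 2 * axy * ((4 * m * (m - 1) * x * y) * PP
        + a * ((2 * b * (d * x + c * y) * q
            + 4 * b * (b - 1) * x * y * (c * x + d * y)) * TT))
      + ayy * ((2 * m * q + 4 * m * (m - 1) * y ^ 2) * PP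
        + a * ((4 * b * d * y * q + 2 * b * (c * x + d * y) * q
            + 4 * b * (b - 1) * y ^ 2 * (c * x + d * y)) * TT))
    = PP * ((1 - ε) * ((axx * y ^ 2 - 2 * axy * x * y + ayy * x ^ 2)
          - ε * (axx * x ^ 2 + 2 * axy * x * y + ayy * y ^ 2)))
      + TT * (a * ε * (ε * ((c * x + d * y) * (axx * x ^ 2 + 2 * axy * x * y + ayy * y ^ 2))
          - (c * x + d * y) * ((axx * x ^ 2 + 2 * axy * x * y + ayy * y ^ 2)
              + (axx * y ^ 2 - 2 * axy * x * y + ayy * x ^ 2))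
          + 2 * ((c * y - d * x) * (axy * (x ^ 2 - y ^ 2) + (ayy - axx) * x * y)))) := by
  subst hm hb hq; ring

lemma key_core (ε a lam Lam Q1 Q2 Bv w v q r T : ℝ)
    (hε0 : 0 < ε) (hε1 : ε < 1) (ha : 1 ≤ a)
    (hlam : 0 < lam) (hLam : lam ≤ Lam)
    (hq : 0 < q) (hr : 0 < r) (hr2 : r ^ 2 = q) (hT : 0 < T)
    (hcoef : ε * (lam + Lam) + 5 * a * ε * Lam ≤ lam)
    (hQ1l : lam * q ≤ Q1) (hQ1u : Q1 ≤ Lam * q)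
    (hQ2l : lam * q ≤ Q2) (hQ2u : Q2 ≤ Lam * q)
    (hBu : Bv ≤ (Lam - lam) * q) (hBl : -((Lam - lam) * q) ≤ Bv)
    (hwl : -r ≤ w) (hwu : w ≤ r) (hvl : -r ≤ v) (hvu : v ≤ r) :
    0 ≤ T * r * ((1 - ε) * (Q2 - ε * Q1))
      + T * (a * ε * (ε * (w * Q1) - w * (Q1 + Q2) + 2 * (v * Bv))) := by
  have hQ1nn : 0 ≤ Q1 := le_trans (mul_nonneg hlam.le hq.le) hQ1l
  have hQ2nn : 0 ≤ Q2 := le_trans (mul_nonneg hlam.le hq.le) hQ2l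
  have h1 : -(r * (Lam * q)) ≤ w * Q1 := by
    have ha1 : 0 ≤ (w + r) * Q1 := mul_nonneg (by linarith) hQ1nn
    have ha2 : r * Q1 ≤ r * (Lam * q) := mul_le_mul_of_nonneg_left hQ1u hr.le
    nlinarith
  have h2 : w * (Q1 + Q2) ≤ r * (2 * Lam * q) := by
    have ha1 : w * (Q1 + Q2) ≤ r * (Q1 + Q2) :=
      mul_le_mul_of_nonneg_right hwu (by linarith)
    have ha2 : r * (Q1 + Q2) ≤ r * (2 * Lam * q) :=
      mul_le_mul_of_nonneg_left (by linarith) hr.le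
    linarith
  have h3 : -(r * ((Lam - lam) * q)) ≤ v * Bv := by
    have ha1 : 0 ≤ (r + v) * ((Lam - lam) * q + Bv) :=
      mul_nonneg (by linarith) (by linarith)
    have ha2 : 0 ≤ (r - v) * ((Lam - lam) * q - Bv) :=
      mul_nonneg (by linarith) (by linarith)
    nlinarith
  have hK : 0 ≤ r * (Lam * q) := mul_nonneg hr.le (mul_nonneg (by linarith) hq.le)
  have hK2 : 0 ≤ r * (lam * q) := mul_nonneg hr.le (mul_nonneg hlam.le hq.le)
  have hbr : -(5 * (Lam * q * r)) ≤ ε * (w * Q1) - w * (Q1 + Q2) + 2 * (v * Bv) := by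
    have hb1 : ε * (-(r * (Lam * q))) ≤ ε * (w * Q1) :=
      mul_le_mul_of_nonneg_left h1 hε0.le
    have hb3 : ε * (r * (Lam * q)) ≤ r * (Lam * q) := mul_le_of_le_one_left hK hε1.le
    nlinarith
  have hY : -(a * ε * (5 * (Lam * q * r)))
      ≤ a * ε * (ε * (w * Q1) - w * (Q1 + Q2) + 2 * (v * Bv)) := by
    have := mul_le_mul_of_nonneg_left hbr (by nlinarith : (0:ℝ) ≤ a * ε)
    linarith
  have hX : (lam - ε * (lam + Lam)) * q ≤ (1 - ε) * (Q2 - ε * Q1) := by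
    have hb1 : 0 ≤ (1 - ε) * (Q2 - lam * q) := mul_nonneg (by linarith) (by linarith)
    have hb2 : 0 ≤ (1 - ε) * (ε * (Lam * q - Q1)) :=
      mul_nonneg (by linarith) (mul_nonneg hε0.le (by linarith))
    have hb3 : 0 ≤ ε * (ε * (Lam * q)) :=
      mul_nonneg hε0.le (mul_nonneg hε0.le (mul_nonneg (by linarith) hq.le))
    nlinarith [hb1, hb2, hb3]
  have hfin1 : T * r * ((lam - ε * (lam + Lam)) * q) ≤ T * r * ((1 - ε) * (Q2 - ε * Q1)) :=
    mul_le_mul_of_nonneg_left hX (mul_nonneg hT.le hr.le)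
  have hfin2 : T * (-(a * ε * (5 * (Lam * q * r))))
      ≤ T * (a * ε * (ε * (w * Q1) - w * (Q1 + Q2) + 2 * (v * Bv))) :=
    mul_le_mul_of_nonneg_left hY hT.le
  have hfin3 : 0 ≤ T * r * q * (lam - ε * (lam + Lam) - 5 * a * ε * Lam) := by
    exact mul_nonneg (mul_nonneg (mul_nonneg hT.le hr.le) hq.le) (by linarith)
  have heq : T * r * ((lam - ε * (lam + Lam)) * q) + T * (-(a * ε * (5 * (Lam * q * r))))
      = T * r * q * (lam - ε * (lam + Lam) - 5 * a * ε * Lam) := by ring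
  linarith

set_option maxHeartbeats 1000000 in
lemma key_ineq (ε a c d lam Lam axx axy ayy x y : ℝ)
    (hε0 : 0 < ε) (hε1 : ε < 1) (ha : 1 ≤ a) (hcd : c ^ 2 + d ^ 2 = 1)
    (hlam : 0 < lam) (hLam : lam ≤ Lam)
    (hq : 0 < x ^ 2 + y ^ 2)
    (hcoef : ε * (lam + Lam) + 5 * a * ε * Lam ≤ lam)
    (hQ1l : lam * (x ^ 2 + y ^ 2) ≤ axx * x ^ 2 + 2 * axy * x * y + ayy * y ^ 2)
    (hQ1u : axx * x ^ 2 + 2 * axy * x * y + ayy * y ^ 2 ≤ Lam * (x ^ 2 + y ^ 2))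
    (hQ2l : lam * (x ^ 2 + y ^ 2) ≤ axx * y ^ 2 - 2 * axy * x * y + ayy * x ^ 2)
    (hQ2u : axx * y ^ 2 - 2 * axy * x * y + ayy * x ^ 2 ≤ Lam * (x ^ 2 + y ^ 2))
    (hQdl : lam * (2 * (x ^ 2 + y ^ 2))
        ≤ axx * (x - y) ^ 2 + 2 * axy * (x - y) * (x + y) + ayy * (x + y) ^ 2)
    (hQdu : axx * (x - y) ^ 2 + 2 * axy * (x - y) * (x + y) + ayy * (x + y) ^ 2
        ≤ Lam * (2 * (x ^ 2 + y ^ 2))) :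
    0 ≤ axx * SXX ((1 - ε) / 2) (-ε / 2) a c d x y
      + 2 * axy * SXY ((1 - ε) / 2) (-ε / 2) a c d x y
      + ayy * SYY ((1 - ε) / 2) (-ε / 2) a c d x y := by
  have hr : 0 < Real.sqrt (x ^ 2 + y ^ 2) := Real.sqrt_pos.mpr hq
  have hr2 : Real.sqrt (x ^ 2 + y ^ 2) ^ 2 = x ^ 2 + y ^ 2 := Real.sq_sqrt hq.le
  have hT : 0 < (x ^ 2 + y ^ 2) ^ (-ε / 2 - 2 : ℝ) := Real.rpow_pos_of_pos hq _
  have hPT : (x ^ 2 + y ^ 2) ^ ((1 - ε) / 2 - 2 : ℝ)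
      = (x ^ 2 + y ^ 2) ^ (-ε / 2 - 2 : ℝ) * Real.sqrt (x ^ 2 + y ^ 2) := by
    rw [show (1 - ε) / 2 - 2 = (-ε / 2 - 2) + 1 / 2 by ring,
      Real.rpow_add hq, Real.sqrt_eq_rpow]
  have habs : ∀ z : ℝ, z ^ 2 ≤ x ^ 2 + y ^ 2 →
      -Real.sqrt (x ^ 2 + y ^ 2) ≤ z ∧ z ≤ Real.sqrt (x ^ 2 + y ^ 2) := by
    intro z hz
    have h1 : |z| ≤ Real.sqrt (x ^ 2 + y ^ 2) := by
      rw [← Real.sqrt_sq_eq_abs]; exact Real.sqrt_le_sqrt hz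
    constructor
    · linarith [neg_abs_le z]
    · linarith [le_abs_self z]
  obtain ⟨hwl, hwu⟩ := habs (c * x + d * y) (by nlinarith [sq_nonneg (c * y - d * x)])
  obtain ⟨hvl, hvu⟩ := habs (c * y - d * x) (by nlinarith [sq_nonneg (c * x + d * y)])
  have hBu : axy * (x ^ 2 - y ^ 2) + (ayy - axx) * x * y ≤ (Lam - lam) * (x ^ 2 + y ^ 2) := by
    nlinarith [hQdu, hQ1l, hQ2l]
  have hBl : -((Lam - lam) * (x ^ 2 + y ^ 2))
      ≤ axy * (x ^ 2 - y ^ 2) + (ayy - axx) * x * y := by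
    nlinarith [hQdl, hQ1u, hQ2u]
  unfold SXX SXY SYY
  rw [alg_id ε a c d axx axy ayy x y ((x ^ 2 + y ^ 2) ^ ((1 - ε) / 2 - 2 : ℝ))
    ((x ^ 2 + y ^ 2) ^ (-ε / 2 - 2 : ℝ)) ((1 - ε) / 2) (-ε / 2) (x ^ 2 + y ^ 2)
    rfl rfl rfl, hPT]
  exact key_core ε a lam Lam _ _ _ _ _ _ _ _ hε0 hε1 ha hlam hLam hq hr hr2 hT hcoef
    hQ1l hQ1u hQ2l hQ2u hBu hBl hwl hwu hvl hvu

lemma contDiffAt_sfun (m b a c d : ℝ) (p : ℝ × ℝ) (hq : p.1 ^ 2 + p.2 ^ 2 ≠ 0) :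
    ContDiffAt ℝ 2 (sfun m b a c d) p := by
  have hbase : ContDiffAt ℝ 2 (fun p : ℝ × ℝ => p.1 ^ 2 + p.2 ^ 2) p :=
    ((contDiff_fst.pow 2).add (contDiff_snd.pow 2)).contDiffAt
  have hlin : ContDiffAt ℝ 2 (fun p : ℝ × ℝ => c * p.1 + d * p.2) p :=
    ((contDiff_const.mul contDiff_fst).add (contDiff_const.mul contDiff_snd)).contDiffAt
  exact (hbase.rpow_const_of_ne hq).add
    (contDiffAt_const.mul (hlin.mul (hbase.rpow_const_of_ne hq)))

lemma continuous_sfun (m b a c d : ℝ) (hm : 0 < m) (hmb : m = b + 1 / 2)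
    (ha : 0 ≤ a) (hcd : c ^ 2 + d ^ 2 = 1) :
    Continuous (sfun m b a c d) := by
  rw [continuous_iff_continuousAt]
  intro p
  have hbase : Continuous (fun p : ℝ × ℝ => p.1 ^ 2 + p.2 ^ 2) :=
    (continuous_fst.pow 2).add (continuous_snd.pow 2)
  by_cases hq : p.1 ^ 2 + p.2 ^ 2 = 0
  · have hsp : sfun m b a c d p = 0 := by
      have h1 : p.1 = 0 := by nlinarith [sq_nonneg p.1, sq_nonneg p.2]
      have h2 : p.2 = 0 := by nlinarith [sq_nonneg p.1, sq_nonneg p.2]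
      simp [sfun, h1, h2, Real.zero_rpow hm.ne']
    rw [ContinuousAt, hsp]
    have hbound : ∀ t : ℝ × ℝ, ‖sfun m b a c d t‖ ≤ (1 + a) * (t.1 ^ 2 + t.2 ^ 2) ^ m := by
      intro t
      set qt : ℝ := t.1 ^ 2 + t.2 ^ 2 with hqt
      have hqt0 : 0 ≤ qt := by positivity
      have hw2 : (c * t.1 + d * t.2) ^ 2 ≤ qt := by
        nlinarith [sq_nonneg (c * t.2 - d * t.1)]
      have habs : |c * t.1 + d * t.2| ≤ Real.sqrt qt := by
        rw [← Real.sqrt_sq_eq_abs]; exact Real.sqrt_le_sqrt hw2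
      have hbp : (0:ℝ) ≤ qt ^ b := Real.rpow_nonneg hqt0 _
      have hmp : (0:ℝ) ≤ qt ^ m := Real.rpow_nonneg hqt0 _
      have hkey : |c * t.1 + d * t.2| * qt ^ b ≤ qt ^ m := by
        have h1 : |c * t.1 + d * t.2| * qt ^ b ≤ Real.sqrt qt * qt ^ b :=
          mul_le_mul_of_nonneg_right habs hbp
        have h2 : Real.sqrt qt * qt ^ b = qt ^ m := by
          rw [Real.sqrt_eq_rpow, ← Real.rpow_add' hqt0
            (by rw [hmb] at hm; intro h; linarith)]
          rw [hmb, add_comm]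
        linarith
      calc ‖sfun m b a c d t‖ ≤ qt ^ m + a * (|c * t.1 + d * t.2| * qt ^ b) := by
            rw [sfun]
            refine le_trans (norm_add_le _ _) ?_
            gcongr
            · exact le_of_eq (by rw [Real.norm_eq_abs, abs_of_nonneg (by positivity), hqt])
            · rw [norm_mul, norm_mul]
              simp only [Real.norm_eq_abs]
              rw [abs_of_nonneg ha, abs_of_nonneg hbp]
        _ ≤ qt ^ m + a * qt ^ m := by nlinarith
        _ = (1 + a) * qt ^ m := by ring
    apply squeeze_zero_norm hbound
    have hc : ContinuousAt (fun t : ℝ × ℝ => (1 + a) * (t.1 ^ 2 + t.2 ^ 2) ^ m) p :=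
      (hbase.continuousAt.rpow_const (Or.inr hm.le)).const_mul _
    have := hc.tendsto
    rwa [hq, Real.zero_rpow hm.ne', mul_zero] at this
  · exact ((hbase.continuousAt.rpow_const (Or.inl hq)).add
      (continuousAt_const.mul ((((continuousAt_const.mul continuousAt_fst).add
        (continuousAt_const.mul continuousAt_snd))).mul
        (hbase.continuousAt.rpow_const (Or.inl hq)))))

lemma sfun_polar (ε a θp r θ : ℝ) (hε0 : 0 < ε) (hε1 : ε < 1) (hr : 0 ≤ r) :
    sfun ((1 - ε) / 2) (-ε / 2) a (Real.cos θp) (Real.sin θp)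
      (r * Real.cos θ, r * Real.sin θ) = r ^ (1 - ε) * (1 + a * Real.cos (θ - θp)) := by
  have hbase : (r * Real.cos θ) ^ 2 + (r * Real.sin θ) ^ 2 = r ^ 2 := by
    linear_combination (r ^ 2) * (Real.sin_sq_add_cos_sq θ)
  have hlin : Real.cos θp * (r * Real.cos θ) + Real.sin θp * (r * Real.sin θ)
      = r * Real.cos (θ - θp) := by
    rw [Real.cos_sub]; ring
  rw [sfun]
  simp only
  rw [hbase, hlin]
  rcases eq_or_lt_of_le hr with h0 | hrpos
  · rw [← h0]
    rw [show ((0:ℝ) ^ 2 : ℝ) = 0 by norm_num]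
    rw [Real.zero_rpow (by intro h; nlinarith : ((1 - ε) / 2 : ℝ) ≠ 0),
      Real.zero_rpow (by intro h; nlinarith : ((1 - ε) : ℝ) ≠ 0)]
    ring
  · have h1 : ((r ^ 2 : ℝ)) ^ ((1 - ε) / 2 : ℝ) = r ^ (1 - ε) := by
      rw [← Real.rpow_natCast r 2, ← Real.rpow_mul hr]
      congr 1; push_cast; ring
    have h2 : ((r ^ 2 : ℝ)) ^ (-ε / 2 : ℝ) = r ^ (-ε) := by
      rw [← Real.rpow_natCast r 2, ← Real.rpow_mul hr]
      congr 1; push_cast; ring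
    have h3 : r * r ^ (-ε : ℝ) = r ^ (1 - ε) := by
      rw [show (1 - ε : ℝ) = 1 + -ε by ring, Real.rpow_add hrpos, Real.rpow_one]
    rw [h1, h2]
    calc r ^ (1 - ε) + a * (r * Real.cos (θ - θp) * r ^ (-ε))
        = r ^ (1 - ε) + a * Real.cos (θ - θp) * (r * r ^ (-ε)) := by ring
      _ = r ^ (1 - ε) * (1 + a * Real.cos (θ - θp)) := by rw [h3]; ring

set_option maxHeartbeats 2000000 in
/-- Subsolution at a protruding corner: for a uniformly elliptic operator
`L = −aˣˣ∂ₓ² − 2aˣʸ∂ₓ∂ᵧ − aʸʸ∂ᵧ²` on a sector of angle `> π` (and `≤ 2π`), with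
`|aˣˣ|, |aˣʸ| ≤ C aʸʸ`, there are `ε ∈ (0,1)`, `θ₊ ∈ (θ₀,θ₁)`, `a ≥ 1` and a
function `s` with `s(r,θ) = r^{1−ε}(1 + a cos(θ−θ₊))` on the sector, satisfying
`Ls ≤ 0` in the sector, `s ≤ 0` on the boundary radii and `s(r,θ₊) ≥ r^{1−ε}`. -/
theorem stmt12 (θ₀ θ₁ R lam Lam C : ℝ)
    (hangle : π < θ₁ - θ₀) (hangle' : θ₁ - θ₀ ≤ 2 * π) (hR : 0 < R)
    (hlam : 0 < lam) (hLam : lam ≤ Lam) (hC : 0 < C)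
    (axx axy ayy : ℝ × ℝ → ℝ)
    (S : Set (ℝ × ℝ))
    (hS : S = {p : ℝ × ℝ | ∃ r θ : ℝ, 0 < r ∧ r < R ∧ θ₀ < θ ∧ θ < θ₁ ∧
      p = (r * Real.cos θ, r * Real.sin θ)})
    (hell : ∀ p ∈ S, ∀ ξ : ℝ × ℝ,
      lam * (ξ.1 ^ 2 + ξ.2 ^ 2)
          ≤ axx p * ξ.1 ^ 2 + 2 * axy p * ξ.1 * ξ.2 + ayy p * ξ.2 ^ 2 ∧
      axx p * ξ.1 ^ 2 + 2 * axy p * ξ.1 * ξ.2 + ayy p * ξ.2 ^ 2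
          ≤ Lam * (ξ.1 ^ 2 + ξ.2 ^ 2))
    (hbound : ∀ p ∈ S, |axx p| ≤ C * ayy p ∧ |axy p| ≤ C * ayy p) :
    ∃ ε ∈ Ioo (0:ℝ) 1, ∃ θp ∈ Ioo θ₀ θ₁, ∃ a : ℝ, 1 ≤ a ∧
      ∃ s : ℝ × ℝ → ℝ,
        ContDiffOn ℝ 2 s S ∧ ContinuousOn s (closure S) ∧
        (∀ r θ : ℝ, 0 ≤ r → r ≤ R → θ₀ ≤ θ → θ ≤ θ₁ →
          s (r * Real.cos θ, r * Real.sin θ)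
            = r ^ (1 - ε) * (1 + a * Real.cos (θ - θp))) ∧
        (∀ p ∈ S,
          0 ≤ axx p * deriv (fun x => deriv (fun x' => s (x', p.2)) x) p.1
            + 2 * axy p * deriv (fun x => deriv (fun y => s (x, y)) p.2) p.1
            + ayy p * deriv (fun y => deriv (fun y' => s (p.1, y')) y) p.2) ∧
        (∀ r ∈ Icc (0:ℝ) R,
          s (r * Real.cos θ₀, r * Real.sin θ₀) ≤ 0 ∧
          s (r * Real.cos θ₁, r * Real.sin θ₁) ≤ 0) ∧
        (∀ r ∈ Icc (0:ℝ) R,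
          r ^ (1 - ε) ≤ s (r * Real.cos θp, r * Real.sin θp)) := by
  have hpi : 0 < π := pi_pos
  have hcosneg : Real.cos ((θ₁ - θ₀) / 2) < 0 :=
    Real.cos_neg_of_pi_div_two_lt_of_lt (by linarith) (by linarith)
  have hcosge : -1 ≤ Real.cos ((θ₁ - θ₀) / 2) := Real.neg_one_le_cos _
  set A : ℝ := 1 / (-Real.cos ((θ₁ - θ₀) / 2)) with hA
  have hA1 : 1 ≤ A := by rw [hA, le_div_iff₀ (by linarith)]; linarith
  have hacos : A * Real.cos ((θ₁ - θ₀) / 2) = -1 := by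
    rw [hA, div_mul_eq_mul_div, one_mul, div_neg, div_self hcosneg.ne]
  set E : ℝ := lam / (2 * (1 + A) * (lam + 5 * Lam)) with hE
  have hden : 0 < 2 * (1 + A) * (lam + 5 * Lam) := by nlinarith
  have hE0 : 0 < E := div_pos hlam hden
  have hE1 : E < 1 := by rw [hE, div_lt_one hden]; nlinarith
  have hEeq : E * (2 * (1 + A) * (lam + 5 * Lam)) = lam := by
    rw [hE, div_mul_cancel₀ _ hden.ne']
  have hcoef : E * (lam + Lam) + 5 * A * E * Lam ≤ lam := by
    have k1 : (lam + Lam) + 5 * A * Lam ≤ 2 * ((1 + A) * (lam + 5 * Lam)) := by nlinarith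
    have k2 : E * ((lam + Lam) + 5 * A * Lam) ≤ E * (2 * ((1 + A) * (lam + 5 * Lam))) :=
      mul_le_mul_of_nonneg_left k1 hE0.le
    nlinarith [hEeq, k2]
  clear hA hE
  clear_value A E
  have hqpos : ∀ p ∈ S, 0 < p.1 ^ 2 + p.2 ^ 2 := by
    intro p hp
    rw [hS] at hp
    obtain ⟨r, θ, hr0, -, -, -, rfl⟩ := hp
    show 0 < (r * Real.cos θ) ^ 2 + (r * Real.sin θ) ^ 2
    have hb : (r * Real.cos θ) ^ 2 + (r * Real.sin θ) ^ 2 = r ^ 2 := by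
      linear_combination (r ^ 2) * (Real.sin_sq_add_cos_sq θ)
    rw [hb]; exact pow_pos hr0 2
  refine ⟨E, ⟨hE0, hE1⟩, (θ₀ + θ₁) / 2, ⟨by linarith, by linarith⟩, A, hA1,
    sfun ((1 - E) / 2) (-E / 2) A (Real.cos ((θ₀ + θ₁) / 2)) (Real.sin ((θ₀ + θ₁) / 2)),
    ?_, ?_, ?_, ?_, ?_, ?_⟩
  · intro p hp
    exact (contDiffAt_sfun _ _ _ _ _ p (hqpos p hp).ne').contDiffWithinAt
  · exact (continuous_sfun _ _ _ _ _ (by linarith) (by ring) (by linarith)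
      (Real.cos_sq_add_sin_sq _)).continuousOn
  · intro r θ hr _ _ _
    exact sfun_polar E A ((θ₀ + θ₁) / 2) r θ hE0 hE1 hr
  · intro p hp
    have hq := hqpos p hp
    rw [deriv_xx _ _ _ _ _ p.1 p.2 hq.ne', deriv_xy _ _ _ _ _ p.1 p.2 hq.ne',
      deriv_yy _ _ _ _ _ p.1 p.2 hq.ne']
    have H1 := hell p hp (p.1, p.2)
    have H2 := hell p hp (-p.2, p.1)
    have H3 := hell p hp (p.1 - p.2, p.1 + p.2)
    simp only at H1 H2 H3
    exact key_ineq E A _ _ lam Lam (axx p) (axy p) (ayy p) p.1 p.2 hE0 hE1 hA1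
      (Real.cos_sq_add_sin_sq _) hlam hLam hq hcoef
      (by linarith [H1.1]) (by linarith [H1.2])
      (by linarith [H2.1]) (by linarith [H2.2])
      (by linarith [H3.1]) (by linarith [H3.2])
  · intro r hr
    obtain ⟨hr0, hrR⟩ := hr
    have hrp : 0 ≤ r ^ (1 - E) := Real.rpow_nonneg hr0 _
    constructor
    · rw [sfun_polar E A ((θ₀ + θ₁) / 2) r θ₀ hE0 hE1 hr0]
      have hc : Real.cos (θ₀ - (θ₀ + θ₁) / 2) = Real.cos ((θ₁ - θ₀) / 2) := by
        rw [show θ₀ - (θ₀ + θ₁) / 2 = -((θ₁ - θ₀) / 2) by ring, Real.cos_neg]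
      rw [hc]
      have h0 : 1 + A * Real.cos ((θ₁ - θ₀) / 2) = 0 := by linarith
      rw [h0, mul_zero]
    · rw [sfun_polar E A ((θ₀ + θ₁) / 2) r θ₁ hE0 hE1 hr0]
      have hc : Real.cos (θ₁ - (θ₀ + θ₁) / 2) = Real.cos ((θ₁ - θ₀) / 2) := by
        rw [show θ₁ - (θ₀ + θ₁) / 2 = (θ₁ - θ₀) / 2 by ring]
      rw [hc]
      have h0 : 1 + A * Real.cos ((θ₁ - θ₀) / 2) = 0 := by linarith
      rw [h0, mul_zero]
  · intro r hr
    obtain ⟨hr0, hrR⟩ := hr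
    have hrp : 0 ≤ r ^ (1 - E) := Real.rpow_nonneg hr0 _
    rw [sfun_polar E A ((θ₀ + θ₁) / 2) r ((θ₀ + θ₁) / 2) hE0 hE1 hr0]
    rw [sub_self, Real.cos_zero, mul_one]
    nlinarith
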